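/- Let T^wf be the Worsey–Farin split of a tetrahedron T ⊂ ℝ³ and r ≥ 0 an integer. For any θ ∈ V_r^3(T^wf) there exist ψ ∈ L_{r+1}^2(T^wf) ∩ V̊_{r+1}^2(T^wf) and γ ∈ 𝒱_r^3(T^wf) such that μ^s θ = div(μ^s ψ) + μ^s γ on T for every integer s ≥ 0. -/

import Mathlib

open MeasureTheory MvPolynomial

noncomputable section

/-- Euclidean 3-space. -/
abbrev E3 : Type := EuclideanSpace ℝ (Fin 3)

/-- Build a point of `E3` from its coordinates. -/
def mk3 (f : Fin 3 → ℝ) : E3 := WithLp.toLp 2 f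

/-- Polynomials in three real variables. -/
abbrev Poly3 : Type := MvPolynomial (Fin 3) ℝ

/-- `degLE r p` : `p` has total degree at most `r`; for `r < 0` this forces `p = 0`,
so that `P_r` is the trivial space for negative `r`. -/
def degLE (r : ℤ) (p : Poly3) : Prop := p = 0 ∨ (p.totalDegree : ℤ) ≤ r

/-- Evaluation of a polynomial at a point of `ℝ³`. -/
def pev (p : Poly3) (x : E3) : ℝ := MvPolynomial.eval (fun i => x i) p

/-- Index set for the 12 tetrahedra of a Worsey–Farin split: a pair `(i, j)` where
`i` is the face index and `j ≠ i`. -/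
abbrev WFIdx : Type := {p : Fin 4 × Fin 4 // p.2 ≠ p.1}

/-- A piecewise polynomial scalar field on the Worsey–Farin split,
recorded as one polynomial per piece. -/
abbrev PwS : Type := WFIdx → Poly3

/-- A piecewise polynomial vector field on the Worsey–Farin split. -/
abbrev PwV : Type := WFIdx → Fin 3 → Poly3

/-- Evaluation of a polynomial vector field at a point. -/
def vev (v : Fin 3 → Poly3) (x : E3) : E3 := mk3 (fun k => pev (v k) x)

/-- Euclidean dot product on `ℝ³`. -/
def dot3 (u w : E3) : ℝ := ∑ k, u k * w k

/-- Cross product on `ℝ³`. -/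
def cross3 (u w : E3) : E3 :=
  mk3 ![u 1 * w 2 - u 2 * w 1, u 2 * w 0 - u 0 * w 2, u 0 * w 1 - u 1 * w 0]

/-- Piecewise gradient. -/
def pwGrad (q : PwS) : PwV := fun σ k => pderiv k (q σ)

/-- Piecewise divergence. -/
def pwDiv (v : PwV) : PwS := fun σ => ∑ k, pderiv k (v σ k)

/-- Curl of a polynomial vector field. -/
def pCurl (v : Fin 3 → Poly3) : Fin 3 → Poly3 :=
  ![pderiv 1 (v 2) - pderiv 2 (v 1),
    pderiv 2 (v 0) - pderiv 0 (v 2),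
    pderiv 0 (v 1) - pderiv 1 (v 0)]

/-- Piecewise curl. -/
def pwCurl (v : PwV) : PwV := fun σ => pCurl (v σ)

/-- The gradient (vector of partial derivatives) of a polynomial, evaluated at a point. -/
def pgradv (p : Poly3) (x : E3) : E3 := mk3 (fun k => pev (pderiv k p) x)

/-- A Worsey–Farin split of a tetrahedron `T ⊂ ℝ³`: the vertices `x 0, …, x 3` of `T`,
an interior split point `z`, and for each face `i` (the face opposite the vertex `x i`)
a split point `m i` in the relative interior of that face. -/
structure WorseyFarin : Type where
  x : Fin 4 → E3
  z : E3
  m : Fin 4 → E3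
  indep : AffineIndependent ℝ x
  hz : z ∈ interior (convexHull ℝ (Set.range x))
  hm : ∀ i, ∃ w : Fin 4 → ℝ, (∀ j, j ≠ i → 0 < w j) ∧ w i = 0 ∧ (∑ j, w j) = 1 ∧
        m i = ∑ j, w j • x j

namespace WorseyFarin

variable (W : WorseyFarin)

/-- The tetrahedron `T` itself. -/
def T : Set E3 := convexHull ℝ (Set.range W.x)

/-- The face of `T` opposite the vertex `x i`. -/
def face (i : Fin 4) : Set E3 := convexHull ℝ (W.x '' {k | k ≠ i})

/-- The sub-tetrahedron of the Worsey–Farin split indexed by `σ = (i, j)`: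
its vertices are `z`, `m i` and the two vertices `x k` with `k ∉ {i, j}`. -/
def tet (σ : WFIdx) : Set E3 :=
  convexHull ℝ ({W.z, W.m σ.1.1} ∪ W.x '' {k | k ≠ σ.1.1 ∧ k ≠ σ.1.2})

/-- The triangle of the Clough–Tocher split of face `i` lying under the piece `(i, j)`:
the triangle with vertices `m i`, `x k`, `x l` for `k, l ∉ {i, j}`. -/
def ftri (i j : Fin 4) : Set E3 :=
  convexHull ℝ ({W.m i} ∪ W.x '' {k | k ≠ i ∧ k ≠ j})

end WorseyFarin

/-- Degree bound for a piecewise scalar field. -/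
def degS (r : ℤ) (q : PwS) : Prop := ∀ σ, degLE r (q σ)

/-- Degree bound for a piecewise vector field. -/
def degV (r : ℤ) (v : PwV) : Prop := ∀ σ k, degLE r (v σ k)

/-- Global continuity of a piecewise scalar field: all traces agree on overlaps;
this is membership in `C⁰(T)`, hence (for piecewise polynomials) in `H¹(T)`. -/
def SCont (W : WorseyFarin) (q : PwS) : Prop :=
  ∀ σ τ : WFIdx, ∀ x ∈ W.tet σ ∩ W.tet τ, pev (q σ) x = pev (q τ) x

/-- Global continuity of a piecewise vector field. -/
def VCont (W : WorseyFarin) (v : PwV) : Prop :=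
  ∀ σ τ : WFIdx, ∀ x ∈ W.tet σ ∩ W.tet τ, vev (v σ) x = vev (v τ) x

/-- Membership in `H(div; T)` for a piecewise polynomial vector field: across every
internal (two-dimensional) interface of the Worsey–Farin split, the jump of `v`
is tangent to the interface (i.e. the normal component of `v` is continuous).
The interfaces are the triangles `{z, m i, x k}` (between two pieces of the same
Alfeld component) and the triangles `{z, x k, x l}` (between two Alfeld components). -/
def HdivMem (W : WorseyFarin) (v : PwV) : Prop :=
  (∀ (i j j' k : Fin 4) (hj : j ≠ i) (hj' : j' ≠ i), j ≠ j' → k ≠ i → k ≠ j → k ≠ j' →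
    ∀ x ∈ W.tet ⟨(i, j), hj⟩ ∩ W.tet ⟨(i, j'), hj'⟩,
      vev (v ⟨(i, j), hj⟩) x - vev (v ⟨(i, j'), hj'⟩) x ∈
        Submodule.span ℝ ({W.m i - W.z, W.x k - W.z} : Set E3)) ∧
  (∀ (i j k l : Fin 4) (hj : j ≠ i) (hi : i ≠ j), k ≠ i → k ≠ j → l ≠ i → l ≠ j → k ≠ l →
    ∀ x ∈ W.tet ⟨(i, j), hj⟩ ∩ W.tet ⟨(j, i), hi⟩,
      vev (v ⟨(i, j), hj⟩) x - vev (v ⟨(j, i), hi⟩) x ∈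
        Submodule.span ℝ ({W.x k - W.z, W.x l - W.z} : Set E3))

/-- Membership in `H(curl; T)` for a piecewise polynomial vector field: across every
internal interface the jump of `v` is orthogonal to the interface (i.e. the
tangential components of `v` are continuous). -/
def HcurlMem (W : WorseyFarin) (v : PwV) : Prop :=
  (∀ (i j j' k : Fin 4) (hj : j ≠ i) (hj' : j' ≠ i), j ≠ j' → k ≠ i → k ≠ j → k ≠ j' →
    ∀ x ∈ W.tet ⟨(i, j), hj⟩ ∩ W.tet ⟨(i, j'), hj'⟩,
      dot3 (vev (v ⟨(i, j), hj⟩) x - vev (v ⟨(i, j'), hj'⟩) x) (W.m i - W.z) = 0 ∧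
      dot3 (vev (v ⟨(i, j), hj⟩) x - vev (v ⟨(i, j'), hj'⟩) x) (W.x k - W.z) = 0) ∧
  (∀ (i j k l : Fin 4) (hj : j ≠ i) (hi : i ≠ j), k ≠ i → k ≠ j → l ≠ i → l ≠ j → k ≠ l →
    ∀ x ∈ W.tet ⟨(i, j), hj⟩ ∩ W.tet ⟨(j, i), hi⟩,
      dot3 (vev (v ⟨(i, j), hj⟩) x - vev (v ⟨(j, i), hi⟩) x) (W.x k - W.z) = 0 ∧
      dot3 (vev (v ⟨(i, j), hj⟩) x - vev (v ⟨(j, i), hi⟩) x) (W.x l - W.z) = 0)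

/-- Zero boundary trace of a scalar field: the trace on each boundary face vanishes. -/
def zeroTraceS (W : WorseyFarin) (q : PwS) : Prop :=
  ∀ σ : WFIdx, ∀ x ∈ W.tet σ ∩ W.face σ.1.1, pev (q σ) x = 0

/-- Zero boundary trace of a vector field. -/
def zeroTraceV (W : WorseyFarin) (v : PwV) : Prop :=
  ∀ σ : WFIdx, ∀ x ∈ W.tet σ ∩ W.face σ.1.1, vev (v σ) x = 0

/-- `v × n = 0` on `∂T`: the tangential components of `v` vanish on each boundary face. -/
def zeroTan (W : WorseyFarin) (v : PwV) : Prop :=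
  ∀ σ : WFIdx, ∀ x ∈ W.tet σ ∩ W.face σ.1.1, ∀ k l : Fin 4, k ≠ σ.1.1 → l ≠ σ.1.1 →
    dot3 (vev (v σ) x) (W.x k - W.x l) = 0

/-- `v ⬝ n = 0` on `∂T`: on each boundary face, `v` is tangent to the face. -/
def zeroNor (W : WorseyFarin) (v : PwV) : Prop :=
  ∀ σ : WFIdx, ∀ x ∈ W.tet σ ∩ W.face σ.1.1,
    vev (v σ) x ∈ Submodule.span ℝ
      ((fun p : Fin 4 × Fin 4 => W.x p.1 - W.x p.2) '' {p | p.1 ≠ σ.1.1 ∧ p.2 ≠ σ.1.1})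

/-- Mean-zero condition `∫_T q dx = 0`. -/
def meanZero (W : WorseyFarin) (q : PwS) : Prop :=
  (∑ σ : WFIdx, ∫ x in W.tet σ, pev (q σ) x) = 0

/-- Continuity of a (possibly discontinuous) scalar field on each face `F` of `T`. -/
def faceCont (W : WorseyFarin) (q : PwS) : Prop :=
  ∀ σ τ : WFIdx, σ.1.1 = τ.1.1 → ∀ x ∈ W.tet σ ∩ W.tet τ ∩ W.face σ.1.1,
    pev (q σ) x = pev (q τ) x

/-- Continuity of `v × n` on each face `F` of `T`: the tangential components of the
traces on `F` agree. -/
def faceTanCont (W : WorseyFarin) (v : PwV) : Prop :=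
  ∀ σ τ : WFIdx, σ.1.1 = τ.1.1 → ∀ x ∈ W.tet σ ∩ W.tet τ ∩ W.face σ.1.1,
    ∀ k l : Fin 4, k ≠ σ.1.1 → l ≠ σ.1.1 →
      dot3 (vev (v σ) x - vev (v τ) x) (W.x k - W.x l) = 0

/-! ### The local finite element spaces on the Worsey–Farin split -/

/-- `V_r^0(T^wf) = P_r(T^wf) ∩ H¹(T)`. -/
def memV0 (W : WorseyFarin) (r : ℤ) (q : PwS) : Prop := degS r q ∧ SCont W q

/-- `L_r^0(T^wf) = V_r^0(T^wf)`, the scalar Lagrange space. -/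
def memL0 (W : WorseyFarin) (r : ℤ) (q : PwS) : Prop := memV0 W r q

/-- `V_r^1(T^wf) = [P_r(T^wf)]³ ∩ H(curl; T)`. -/
def memV1 (W : WorseyFarin) (r : ℤ) (v : PwV) : Prop := degV r v ∧ HcurlMem W v

/-- `V_r^2(T^wf) = [P_r(T^wf)]³ ∩ H(div; T)`. -/
def memV2 (W : WorseyFarin) (r : ℤ) (v : PwV) : Prop := degV r v ∧ HdivMem W v

/-- `V_r^3(T^wf) = P_r(T^wf)`. -/
def memV3 (W : WorseyFarin) (r : ℤ) (q : PwS) : Prop := degS r q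

/-- `L_r^1(T^wf) = L_r^2(T^wf) = [L_r^0(T^wf)]³`, the vector Lagrange space. -/
def memL1 (W : WorseyFarin) (r : ℤ) (v : PwV) : Prop := degV r v ∧ VCont W v

/-- `L_r^3(T^wf) = V_r^0(T^wf)`. -/
def memL3 (W : WorseyFarin) (r : ℤ) (q : PwS) : Prop := memV0 W r q

/-- `S_r^0(T^wf) = {v ∈ L_r^0 : grad v ∈ L_{r-1}^1}`. -/
def memS0 (W : WorseyFarin) (r : ℤ) (q : PwS) : Prop :=
  memL0 W r q ∧ memL1 W (r - 1) (pwGrad q)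

/-- `S_r^1(T^wf) = {v ∈ L_r^1 : curl v ∈ L_{r-1}^2}`. -/
def memS1 (W : WorseyFarin) (r : ℤ) (v : PwV) : Prop :=
  memL1 W r v ∧ memL1 W (r - 1) (pwCurl v)

/-- `S_r^2(T^wf) = {v ∈ L_r^2 : div v ∈ L_{r-1}^3}`. -/
def memS2 (W : WorseyFarin) (r : ℤ) (v : PwV) : Prop :=
  memL1 W r v ∧ memL3 W (r - 1) (pwDiv v)

/-- `V̊_r^0(T^wf) = V_r^0 ∩ H̊¹(T)`. -/
def memV0o (W : WorseyFarin) (r : ℤ) (q : PwS) : Prop := memV0 W r q ∧ zeroTraceS W q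

/-- `V̊_r^1(T^wf) = {v ∈ V_r^1 : v × n = 0 on ∂T}`. -/
def memV1o (W : WorseyFarin) (r : ℤ) (v : PwV) : Prop := memV1 W r v ∧ zeroTan W v

/-- `V̊_r^2(T^wf) = {v ∈ V_r^2 : v ⬝ n = 0 on ∂T}`. -/
def memV2o (W : WorseyFarin) (r : ℤ) (v : PwV) : Prop := memV2 W r v ∧ zeroNor W v

/-- `V̊_r^3(T^wf) = V_r^3 ∩ L²₀(T)`. -/
def memV3o (W : WorseyFarin) (r : ℤ) (q : PwS) : Prop := memV3 W r q ∧ meanZero W q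

/-- `L̊_r^0(T^wf)`. -/
def memL0o (W : WorseyFarin) (r : ℤ) (q : PwS) : Prop := memL0 W r q ∧ zeroTraceS W q

/-- `L̊_r^1(T^wf) = L̊_r^2(T^wf) = [L̊_r^0(T^wf)]³`. -/
def memL1o (W : WorseyFarin) (r : ℤ) (v : PwV) : Prop := memL1 W r v ∧ zeroTraceV W v

/-- `L̊_r^3(T^wf) = L²₀(T) ∩ L̊_r^0(T^wf)`. -/
def memL3o (W : WorseyFarin) (r : ℤ) (q : PwS) : Prop :=
  memL0 W r q ∧ zeroTraceS W q ∧ meanZero W q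

/-- `S̊_r^0(T^wf) = {v ∈ L̊_r^0 : grad v ∈ L̊_{r-1}^1}`. -/
def memS0o (W : WorseyFarin) (r : ℤ) (q : PwS) : Prop :=
  memL0o W r q ∧ memL1o W (r - 1) (pwGrad q)

/-- `S̊_r^1(T^wf) = {v ∈ L̊_r^1 : curl v ∈ L̊_{r-1}^2}`. -/
def memS1o (W : WorseyFarin) (r : ℤ) (v : PwV) : Prop :=
  memL1o W r v ∧ memL1o W (r - 1) (pwCurl v)

/-- `S̊_r^2(T^wf) = {v ∈ L̊_r^2 : div v ∈ L̊_{r-1}^3}`. -/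
def memS2o (W : WorseyFarin) (r : ℤ) (v : PwV) : Prop :=
  memL1o W r v ∧ memL3o W (r - 1) (pwDiv v)

/-- `𝒱_r^2(T^wf) = {v ∈ V_r^2 : v × n continuous on each face F of T}`. -/
def memCalV2 (W : WorseyFarin) (r : ℤ) (v : PwV) : Prop := memV2 W r v ∧ faceTanCont W v

/-- `𝒱̊_r^2(T^wf) = {v ∈ 𝒱_r^2 : v ⬝ n = 0 on each face F of T}`. -/
def memCalV2o (W : WorseyFarin) (r : ℤ) (v : PwV) : Prop := memCalV2 W r v ∧ zeroNor W v

/-- `𝒱_r^3(T^wf) = {q ∈ V_r^3 : q continuous on each face F of T}`. -/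
def memCalV3 (W : WorseyFarin) (r : ℤ) (q : PwS) : Prop := memV3 W r q ∧ faceCont W q

/-- `𝒱̊_r^3(T^wf) = 𝒱_r^3 ∩ L²₀(T)`. -/
def memCalV3o (W : WorseyFarin) (r : ℤ) (q : PwS) : Prop := memCalV3 W r q ∧ meanZero W q

/-- `IsHat W μ` : `μ` is (the collection of polynomial pieces of) the piecewise linear
"hat" function of the Alfeld split: affine on each piece, `μ(z) = 1`, and `μ = 0` on `∂T`
(it vanishes at the vertices of `T` and at the face split points). -/
def IsHat (W : WorseyFarin) (μ : PwS) : Prop :=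
  ∀ σ : WFIdx, degLE 1 (μ σ) ∧ pev (μ σ) W.z = 1 ∧ pev (μ σ) (W.m σ.1.1) = 0 ∧
    ∀ k : Fin 4, k ≠ σ.1.1 → k ≠ σ.1.2 → pev (μ σ) (W.x k) = 0

namespace WFAux

/-! ### ring-hom facts about pev -/
lemma pev_add (p q : Poly3) (x : E3) : pev (p + q) x = pev p x + pev q x := by simp [pev]
lemma pev_sub (p q : Poly3) (x : E3) : pev (p - q) x = pev p x - pev q x := by simp [pev]
lemma pev_mul (p q : Poly3) (x : E3) : pev (p * q) x = pev p x * pev q x := by simp [pev]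
lemma pev_pow (p : Poly3) (n : ℕ) (x : E3) : pev (p ^ n) x = pev p x ^ n := by simp [pev]
lemma pev_C (a : ℝ) (x : E3) : pev (C a) x = a := by simp [pev]
lemma pev_zero (x : E3) : pev 0 x = 0 := by simp [pev]
lemma pev_sum {ι : Type*} (s : Finset ι) (f : ι → Poly3) (x : E3) :
    pev (∑ i ∈ s, f i) x = ∑ i ∈ s, pev (f i) x := by simp [pev]

/-! ### affine polynomials -/
def mkAff (a : ℝ) (c : Fin 3 → ℝ) : Poly3 := C a + ∑ k, C (c k) * X k

lemma pev_mkAff (a : ℝ) (c : Fin 3 → ℝ) (x : E3) :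
    pev (mkAff a c) x = a + ∑ k, c k * x k := by
  simp [mkAff, pev]

lemma pderiv_mkAff (a : ℝ) (c : Fin 3 → ℝ) (k : Fin 3) :
    pderiv k (mkAff a c) = C (c k) := by
  classical
  simp only [mkAff, map_add, pderiv_C, map_sum, zero_add]
  rw [Finset.sum_eq_single k]
  · simp [pderiv_C_mul]
  · intro l _ hl
    simp [pderiv_C_mul, pderiv_X_of_ne hl]
  · simp

/-! ### degree calculus -/
lemma degLE_mono {m n : ℤ} (h : m ≤ n) {p : Poly3} (hp : degLE m p) : degLE n p :=
  hp.imp id fun h2 => h2.trans h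

lemma degLE_zero {n : ℤ} : degLE n 0 := Or.inl rfl

lemma degLE_C {n : ℤ} (hn : 0 ≤ n) (a : ℝ) : degLE n (C a) :=
  Or.inr (by rw [totalDegree_C]; exact_mod_cast hn)

lemma degLE_totalDegree {p : Poly3} {n : ℤ} (h : (p.totalDegree : ℤ) ≤ n) : degLE n p := Or.inr h

lemma degLE_add {n : ℤ} {p q : Poly3} (hp : degLE n p) (hq : degLE n q) : degLE n (p + q) := by
  rcases hp with rfl | hp; · simpa using hq
  rcases hq with rfl | hq; · simpa using (show degLE n p from Or.inr hp)
  exact Or.inr <| le_trans (by exact_mod_cast Nat.cast_le.mpr (totalDegree_add p q))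
    (by rw [Nat.cast_max]; exact max_le hp hq)

lemma degLE_neg {n : ℤ} {p : Poly3} (hp : degLE n p) : degLE n (-p) := by
  rcases hp with rfl | hp; · exact Or.inl (neg_zero)
  · exact Or.inr (by rwa [totalDegree_neg])

lemma degLE_sub {n : ℤ} {p q : Poly3} (hp : degLE n p) (hq : degLE n q) : degLE n (p - q) := by
  rw [sub_eq_add_neg]; exact degLE_add hp (degLE_neg hq)

lemma degLE_mul {m n : ℤ} {p q : Poly3} (hp : degLE m p) (hq : degLE n q) :
    degLE (m + n) (p * q) := by
  rcases hp with rfl | hp; · exact Or.inl (zero_mul q)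
  rcases hq with rfl | hq; · exact Or.inl (mul_zero p)
  refine Or.inr (le_trans ?_ (add_le_add hp hq))
  exact_mod_cast Nat.cast_le.mpr (totalDegree_mul p q)

lemma degLE_sum {ι : Type*} {n : ℤ} (s : Finset ι) (f : ι → Poly3)
    (h : ∀ i ∈ s, degLE n (f i)) : degLE n (∑ i ∈ s, f i) := by
  classical
  induction s using Finset.induction with
  | empty => simpa using degLE_zero
  | insert _ _ hne ih =>
    rw [Finset.sum_insert hne]
    exact degLE_add (h _ (Finset.mem_insert_self _ _))
      (ih fun i hi => h i (Finset.mem_insert_of_mem hi))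

lemma degLE_mkAff (a : ℝ) (c : Fin 3 → ℝ) : degLE 1 (mkAff a c) := by
  refine degLE_add (degLE_C zero_le_one a) (degLE_sum _ _ fun k _ => ?_)
  have := degLE_mul (degLE_C le_rfl (c k)) (n := 1) (q := X k)
    (Or.inr (by rw [totalDegree_X]; norm_num))
  simpa using this

lemma degLE_pderiv {n : ℤ} {p : Poly3} (k : Fin 3) (hp : degLE n p) :
    degLE (n - 1) (pderiv k p) := by
  classical
  rcases hp with rfl | hp
  · exact Or.inl (by simp)
  have hsum : pderiv k p = ∑ v ∈ p.support, pderiv k (monomial v (coeff v p)) := by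
    conv_lhs => rw [p.as_sum]
    exact map_sum _ _ _
  rw [hsum]
  refine degLE_sum _ _ fun v hv => ?_
  rw [pderiv_monomial]
  by_cases hzero : coeff v p * (v k : ℝ) = 0
  · rw [hzero, monomial_zero]; exact degLE_zero
  refine degLE_totalDegree ?_
  rw [totalDegree_monomial _ hzero]
  have hvk : 1 ≤ v k := by
    rcases Nat.eq_zero_or_pos (v k) with h0 | h0
    · exact absurd (by rw [h0]; norm_num) hzero
    · exact h0
  have hdec : v - Finsupp.single k 1 + Finsupp.single k 1 = v :=
    tsub_add_cancel_of_le (Finsupp.single_le_iff.mpr hvk)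
  have hsum2 : (v - Finsupp.single k 1).sum (fun _ e => e) + 1 = v.sum (fun _ e => e) := by
    conv_rhs => rw [← hdec]
    rw [Finsupp.sum_add_index' (fun _ => rfl) (fun _ _ _ => rfl)]
    rw [Finsupp.sum_single_index rfl]
  have hle : v.sum (fun _ e => e) ≤ p.totalDegree := le_totalDegree hv
  have : ((v - Finsupp.single k 1).sum fun _ e => e : ℤ) + 1 ≤ n := by
    calc ((v - Finsupp.single k 1).sum fun _ e => e : ℤ) + 1
        = ((v.sum fun _ e => e : ℕ) : ℤ) := by exact_mod_cast hsum2
      _ ≤ (p.totalDegree : ℤ) := by exact_mod_cast hle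
      _ ≤ n := hp
  omega

/-! ### structure of affine polynomials -/
lemma monomial_classify (m : Fin 3 →₀ ℕ) (hm : m.sum (fun _ e => e) ≤ 1) :
    m = 0 ∨ ∃ k, m = Finsupp.single k 1 := by
  classical
  by_cases h0 : m = 0
  · exact Or.inl h0
  right
  obtain ⟨k, hk⟩ : ∃ k, m k ≠ 0 := by
    by_contra h; push_neg at h; exact h0 (Finsupp.ext fun a => h a)
  refine ⟨k, Finsupp.ext fun l => ?_⟩
  have hks : k ∈ m.support := Finsupp.mem_support_iff.mpr hk
  have hsum : m.sum (fun _ e => e) = ∑ a ∈ m.support, m a := rfl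
  have hle : m k ≤ ∑ a ∈ m.support, m a :=
    Finset.single_le_sum (fun a _ => Nat.zero_le _) hks
  have hmk : m k = 1 := le_antisymm (by omega) (Nat.one_le_iff_ne_zero.mpr hk)
  by_cases hlk : l = k
  · subst hlk; simp [hmk]
  · have : m l = 0 := by
      by_contra hml
      have hls : l ∈ m.support := Finsupp.mem_support_iff.mpr hml
      have hsub : ({k, l} : Finset (Fin 3)) ⊆ m.support := by
        intro a ha
        rcases Finset.mem_insert.mp ha with rfl | ha
        · exact hks
        · rwa [Finset.mem_singleton.mp ha]
      have h2 : m k + m l ≤ ∑ a ∈ m.support, m a := by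
        calc m k + m l = ∑ a ∈ ({k, l} : Finset (Fin 3)), m a := by
              rw [Finset.sum_pair (Ne.symm hlk)]
          _ ≤ _ := Finset.sum_le_sum_of_subset hsub
      omega
    simp [this, Finsupp.single_apply, Ne.symm hlk]

lemma coeff_mkAff (a : ℝ) (c : Fin 3 → ℝ) (m : Fin 3 →₀ ℕ) :
    coeff m (mkAff a c) = (if 0 = m then a else 0) +
      ∑ k, (if Finsupp.single k 1 = m then c k else 0) := by
  classical
  rw [mkAff, coeff_add, coeff_C]
  congr 1
  rw [coeff_sum]
  refine Finset.sum_congr rfl fun k _ => ?_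
  rw [coeff_C_mul, coeff_X']
  split <;> simp_all

lemma degLE_one_structure {p : Poly3} (hp : degLE 1 p) :
    ∃ a c, p = mkAff a c := by
  classical
  refine ⟨coeff 0 p, fun k => coeff (Finsupp.single k 1) p, ?_⟩
  rcases hp with rfl | hp
  · ext m; rw [coeff_mkAff]; simp
  have hdeg : p.totalDegree ≤ 1 := by exact_mod_cast hp
  ext m
  rw [coeff_mkAff]
  by_cases hm : m.sum (fun _ e => e) ≤ 1
  · rcases monomial_classify m hm with rfl | ⟨k, rfl⟩
    · simp only [if_pos (rfl : (0 : Fin 3 →₀ ℕ) = 0)]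
      rw [Finset.sum_eq_zero fun k _ => if_neg (by simp [Finsupp.single_eq_zero])]
      simp
    · have hne : (0 : Fin 3 →₀ ℕ) ≠ Finsupp.single k 1 := by
        simp [eq_comm, Finsupp.single_eq_zero]
      rw [if_neg hne, Finset.sum_eq_single k]
      · simp
      · intro l _ hlk
        refine if_neg fun hc => hlk ?_
        exact (Finsupp.single_left_inj (one_ne_zero)).mp hc
      · simp
  · push_neg at hm
    have hc0 : coeff m p = 0 := coeff_eq_zero_of_totalDegree_lt (lt_of_le_of_lt hdeg hm)
    rw [hc0]
    have hm0 : m ≠ 0 := by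
      rintro rfl; simp [Finsupp.sum_zero_index] at hm
    rw [if_neg (fun h => hm0 h.symm), Finset.sum_eq_zero, add_zero]
    intro k _
    refine if_neg fun hc => ?_
    rw [← hc] at hm
    rw [Finsupp.sum_single_index rfl] at hm
    omega

/-! ### E3 sums and affine combinations -/
lemma e3_sum_apply {ι : Type*} (s : Finset ι) (g : ι → E3) (k : Fin 3) :
    (∑ i ∈ s, g i) k = ∑ i ∈ s, g i k := by
  classical
  induction s using Finset.induction with
  | empty => rfl
  | insert _ _ h ih => rw [Finset.sum_insert h, Finset.sum_insert h, ← ih]; rfl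

lemma pev_mkAff_combo {ι : Type*} (a : ℝ) (c : Fin 3 → ℝ) (s : Finset ι) (w : ι → ℝ)
    (y : ι → E3) (hw : ∑ i ∈ s, w i = 1) :
    pev (mkAff a c) (∑ i ∈ s, w i • y i) = ∑ i ∈ s, w i * pev (mkAff a c) (y i) := by
  simp only [pev_mkAff, e3_sum_apply]
  calc a + ∑ k, c k * ∑ i ∈ s, (w i • y i) k
      = a + ∑ k, ∑ i ∈ s, c k * (w i * y i k) := by
        congr 1; refine Finset.sum_congr rfl fun k _ => ?_
        rw [Finset.mul_sum]; rfl
    _ = a + ∑ i ∈ s, ∑ k, c k * (w i * y i k) := by rw [Finset.sum_comm]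
    _ = ∑ i ∈ s, (w i * a + ∑ k, w i * (c k * y i k)) := by
        rw [Finset.sum_add_distrib, ← Finset.sum_mul, hw, one_mul]
        congr 1
        exact Finset.sum_congr rfl fun i _ => Finset.sum_congr rfl fun k _ => by ring
    _ = ∑ i ∈ s, w i * (a + ∑ k, c k * y i k) := by
        refine Finset.sum_congr rfl fun i _ => ?_
        rw [mul_add, Finset.mul_sum]

lemma pev_nonneg_on_hull (a : ℝ) (c : Fin 3 → ℝ) {S : Set E3} {x : E3}
    (hx : x ∈ convexHull ℝ S) (h : ∀ y ∈ S, 0 ≤ pev (mkAff a c) y) :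
    0 ≤ pev (mkAff a c) x := by
  rw [convexHull_eq] at hx
  obtain ⟨ι, t, w, f, hw0, hw1, hfS, rfl⟩ := hx
  rw [Finset.centerMass_eq_of_sum_1 _ _ hw1, pev_mkAff_combo _ _ _ _ _ hw1]
  exact Finset.sum_nonneg fun i hi => mul_nonneg (hw0 i hi) (h _ (hfS i hi))

lemma pev_eq_zero_on_hull (a a' : ℝ) (c c' : Fin 3 → ℝ) {S : Set E3} {x : E3}
    (hx : x ∈ convexHull ℝ S)
    (hp : ∀ y ∈ S, 0 ≤ pev (mkAff a c) y)
    (hq : ∀ y ∈ S, pev (mkAff a c) y = 0 → pev (mkAff a' c') y = 0)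
    (hx0 : pev (mkAff a c) x = 0) : pev (mkAff a' c') x = 0 := by
  rw [convexHull_eq] at hx
  obtain ⟨ι, t, w, f, hw0, hw1, hfS, rfl⟩ := hx
  rw [Finset.centerMass_eq_of_sum_1 _ _ hw1] at hx0 ⊢
  rw [pev_mkAff_combo _ _ _ _ _ hw1] at hx0
  rw [pev_mkAff_combo _ _ _ _ _ hw1]
  have hterm : ∀ i ∈ t, w i * pev (mkAff a c) (f i) = 0 :=
    (Finset.sum_eq_zero_iff_of_nonneg fun i hi =>
      mul_nonneg (hw0 i hi) (hp _ (hfS i hi))).mp hx0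
  refine Finset.sum_eq_zero fun i hi => ?_
  rcases mul_eq_zero.mp (hterm i hi) with h | h
  · rw [h, zero_mul]
  · rw [hq _ (hfS i hi) h, mul_zero]

/-! ### linear combinations of four base affine forms -/
def laP (A : Fin 4 → ℝ) (Cc : Fin 4 → Fin 3 → ℝ) (e : Fin 4 → ℝ) : Poly3 :=
  mkAff (∑ t, e t * A t) (fun k => ∑ t, e t * Cc t k)

lemma pev_laP (A : Fin 4 → ℝ) (Cc : Fin 4 → Fin 3 → ℝ) (e : Fin 4 → ℝ) (y : E3) :
    pev (laP A Cc e) y = ∑ t, e t * pev (mkAff (A t) (Cc t)) y := by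
  simp only [laP, pev_mkAff]
  calc (∑ t, e t * A t) + ∑ k, (∑ t, e t * Cc t k) * y k
      = (∑ t, e t * A t) + ∑ k, ∑ t, e t * Cc t k * y k := by
        congr 1; exact Finset.sum_congr rfl fun k _ => by rw [Finset.sum_mul]
    _ = (∑ t, e t * A t) + ∑ t, ∑ k, e t * Cc t k * y k := by rw [Finset.sum_comm]
    _ = ∑ t, (e t * A t + ∑ k, e t * Cc t k * y k) := by rw [Finset.sum_add_distrib]
    _ = ∑ t, e t * (A t + ∑ k, Cc t k * y k) := by
        refine Finset.sum_congr rfl fun t _ => ?_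
        rw [mul_add, Finset.mul_sum]
        congr 1
        exact Finset.sum_congr rfl fun k _ => by ring

lemma pev_laP_combo {ι : Type*} (A : Fin 4 → ℝ) (Cc : Fin 4 → Fin 3 → ℝ) (e : Fin 4 → ℝ)
    (s : Finset ι) (w : ι → ℝ) (y : ι → E3) (hw : ∑ i ∈ s, w i = 1) :
    pev (laP A Cc e) (∑ i ∈ s, w i • y i) = ∑ i ∈ s, w i * pev (laP A Cc e) (y i) :=
  pev_mkAff_combo _ _ _ _ _ hw

lemma pderiv_laP (A : Fin 4 → ℝ) (Cc : Fin 4 → Fin 3 → ℝ) (e : Fin 4 → ℝ) (k : Fin 3) :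
    pderiv k (laP A Cc e) = C (∑ t, e t * Cc t k) := pderiv_mkAff _ _ _

lemma degLE_laP (A : Fin 4 → ℝ) (Cc : Fin 4 → Fin 3 → ℝ) (e : Fin 4 → ℝ) :
    degLE 1 (laP A Cc e) := degLE_mkAff _ _

/-! ### delta vectors and small sums -/
def dlt (j : Fin 4) : Fin 4 → ℝ := fun t => if t = j then 1 else 0

lemma sum_one_dlt (α : ℝ) (j : Fin 4) (cv : Fin 4 → ℝ) :
    ∑ t, (α * dlt j t) * cv t = α * cv j := by
  classical
  rw [Finset.sum_eq_single j] <;> simp [dlt]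
  tauto

lemma sum_two_dlt (α β : ℝ) (i j : Fin 4) (cv : Fin 4 → ℝ) :
    ∑ t, (α * dlt j t - β * dlt i t) * cv t = α * cv j - β * cv i := by
  classical
  have : ∀ t, (α * dlt j t - β * dlt i t) * cv t
      = (α * dlt j t) * cv t - (β * dlt i t) * cv t := fun t => by ring
  rw [Finset.sum_congr rfl fun t _ => this t, Finset.sum_sub_distrib,
    sum_one_dlt, sum_one_dlt]

end WFAux

/-! ### data for the construction -/
open WFAux in
/-- coefficient vector of the normalized dual functional `σ^{(i)}_j`. -/
def eSP (zc : Fin 4 → ℝ) (mc : Fin 4 → Fin 4 → ℝ) (i j : Fin 4) : Fin 4 → ℝ :=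
  fun t => (mc i j)⁻¹ * dlt j t - (mc i j)⁻¹ * (zc j / zc i) * dlt i t

open WFAux in
/-- coefficient vector of the hat functional `λ_i`. -/
def eLP (zc : Fin 4 → ℝ) (i : Fin 4) : Fin 4 → ℝ := fun t => (zc i)⁻¹ * dlt i t

open WFAux in
/-- coefficient vector of the separating functional between components `i`, `i'`. -/
def eCR (zc : Fin 4 → ℝ) (i i' : Fin 4) : Fin 4 → ℝ :=
  fun t => zc i * dlt i' t - zc i' * dlt i t

/-- the pieces of `θ` on component `i`, extended by junk. -/
def θext (θ : PwS) (i t : Fin 4) : Poly3 := if h : t = i then 0 else θ ⟨(i, t), h⟩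

/-- `w`-polynomials: deviation from the weighted average on component `i`. -/
def wgt (θ : PwS) (mc : Fin 4 → Fin 4 → ℝ) (i t : Fin 4) : Poly3 :=
  θext θ i t - ∑ u, MvPolynomial.C (mc i u) * θext θ i u

/-- `u`-polynomials: weighted deviations. -/
def uwt (θ : PwS) (mc : Fin 4 → Fin 4 → ℝ) (i t : Fin 4) : Poly3 :=
  MvPolynomial.C (mc i t) * wgt θ mc i t

/-- components of the common vector field `W_i` on component `i`. -/
def WvP (θ : PwS) (mc : Fin 4 → Fin 4 → ℝ) (xx : Fin 4 → E3) (z : E3) (i : Fin 4)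
    (k : Fin 3) : Poly3 :=
  ∑ t, uwt θ mc i t * MvPolynomial.C (xx t k - z k)

/-- **Lemma 3.9 of Guzmán–Lischke–Neilan.**  Let `r ≥ 0` and let `μ` be the piecewise
linear hat function of the interior split point.  For any `θ ∈ V_r^3(T^wf)` there exist
`ψ ∈ L_{r+1}^2(T^wf) ∩ V̊_{r+1}^2(T^wf)` and `γ ∈ 𝒱_r^3(T^wf)` such that
`μ^s θ = div(μ^s ψ) + μ^s γ` on `T` for every integer `s ≥ 0`. -/
theorem worseyFarin_mu_div_correction (W : WorseyFarin) (μ : PwS) (hμ : IsHat W μ)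
    (r : ℕ) (θ : PwS) (hθ : memV3 W (r : ℤ) θ) :
    ∃ (ψ : PwV) (γ : PwS),
      memL1 W ((r : ℤ) + 1) ψ ∧ memV2o W ((r : ℤ) + 1) ψ ∧ memCalV3 W (r : ℤ) γ ∧
      ∀ s : ℕ, ∀ σ : WFIdx, ∀ x ∈ W.tet σ,
        pev (μ σ) x ^ s * pev (θ σ) x =
          pev (pwDiv (fun τ k => μ τ ^ s * ψ τ k) σ) x +
            pev (μ σ) x ^ s * pev (γ σ) x := by
    classical
  open WFAux in
  -- ### Setup: affine basis and barycentric data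
  have hcard : Fintype.card (Fin 4) = Module.finrank ℝ E3 + 1 := by
    simp [finrank_euclideanSpace]
  have htot : affineSpan ℝ (Set.range W.x) = ⊤ :=
    W.indep.affineSpan_eq_top_iff_card_eq_finrank_add_one.mpr hcard
  let B : AffineBasis (Fin 4) ℝ E3 := ⟨W.x, W.indep, htot⟩
  set cv : E3 → Fin 4 → ℝ := fun y t => B.coord t y with hcv
  set bA : Fin 4 → ℝ := fun t => B.coord t 0 with hbA
  set bC : Fin 4 → Fin 3 → ℝ := fun t k => B.coord t (mk3 (Pi.single k 1)) - B.coord t 0 with hbC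
  -- evaluation of the base affine polynomials
  have hpevb : ∀ (t : Fin 4) (y : E3), pev (WFAux.mkAff (bA t) (bC t)) y = cv y t := by
    intro t y
    simp only [WFAux.pev_mkAff, hbA, hbC, hcv]
    have hdec : ∀ v : E3, B.coord t v = (B.coord t).linear v + B.coord t 0 := by
      intro v
      have := AffineMap.decomp (B.coord t)
      conv_lhs => rw [this]
      simp
    have hlin : (B.coord t).linear y
        = ∑ k, y k * (B.coord t).linear (mk3 (Pi.single k 1)) := by
      have hy : y = ∑ k, y k • mk3 (Pi.single k 1) := by
        refine PiLp.ext fun j => ?_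
        rw [WFAux.e3_sum_apply]; simp [mk3]
      conv_lhs => rw [hy]
      rw [map_sum]
      exact Finset.sum_congr rfl fun k _ => by rw [map_smul, smul_eq_mul]
    have hlin2 : ∀ k : Fin 3, (B.coord t).linear (mk3 (Pi.single k 1))
        = B.coord t (mk3 (Pi.single k 1)) - B.coord t 0 := fun k => by rw [hdec]; ring
    have hs : ∑ k, (B.coord t (mk3 (Pi.single k 1)) - B.coord t 0) * y k
        = (B.coord t).linear y := by
      rw [hlin]
      exact Finset.sum_congr rfl fun k _ => by rw [hlin2 k]; ring
    rw [hs, hdec y]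
    ring
  -- coordinates of relevant points
  have hcvx : ∀ (u t : Fin 4), cv (W.x u) t = if t = u then 1 else 0 := by
    intro u t
    rw [hcv]
    exact B.coord_apply t u
  set zc : Fin 4 → ℝ := fun t => cv W.z t with hzc
  have hzpos : ∀ t, 0 < zc t := by
    have hint := B.interior_convexHull
    have hrange : Set.range ⇑B = Set.range W.x := rfl
    rw [hrange] at hint
    intro t
    rw [hzc, hcv]
    exact (hint ▸ W.hz) t
  have hzne : ∀ t, zc t ≠ 0 := fun t => (hzpos t).ne'
  have hzsum : ∑ t, zc t = 1 := by
    simp only [hzc, hcv]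
    exact B.sum_coord_apply_eq_one W.z
  have hzrep : W.z = ∑ t, zc t • W.x t := by
    simp only [hzc, hcv]
    exact (B.linear_combination_coord_eq_self W.z).symm
  have hyrep : ∀ y : E3, y = ∑ t, cv y t • W.x t := by
    intro y
    simp only [hcv]
    exact (B.linear_combination_coord_eq_self y).symm
  have hcvsum : ∀ y : E3, ∑ t, cv y t = 1 := by
    intro y; simp only [hcv]; exact B.sum_coord_apply_eq_one y
  -- the split-point weights
  set mc : Fin 4 → Fin 4 → ℝ := fun i => (W.hm i).choose with hmc
  have hmc_pos : ∀ i j, j ≠ i → 0 < mc i j := by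
    intro i j hj; rw [hmc]; exact (W.hm i).choose_spec.1 j hj
  have hmc_self : ∀ i, mc i i = 0 := by
    intro i; rw [hmc]; exact (W.hm i).choose_spec.2.1
  have hmc_sum : ∀ i, ∑ j, mc i j = 1 := by
    intro i; rw [hmc]; exact (W.hm i).choose_spec.2.2.1
  have hmrep : ∀ i, W.m i = ∑ j, mc i j • W.x j := by
    intro i; rw [hmc]; exact (W.hm i).choose_spec.2.2.2
  have hmc_ne : ∀ i j, j ≠ i → mc i j ≠ 0 := fun i j hj => (hmc_pos i j hj).ne'
  -- coordinates of the split points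
  have hcvm : ∀ (i t : Fin 4), cv (W.m i) t = mc i t := by
    intro i t
    rw [← hpevb t (W.m i), hmrep i,
      WFAux.pev_mkAff_combo _ _ _ _ _ (hmc_sum i)]
    rw [Finset.sum_eq_single t]
    · rw [hpevb, hcvx, if_pos rfl, mul_one]
    · intro u _ hut
      rw [hpevb, hcvx, if_neg (Ne.symm hut), mul_zero]
    · intro h; exact absurd (Finset.mem_univ t) h
  -- ### the affine functionals
  set sp : Fin 4 → Fin 4 → Poly3 := fun i j => WFAux.laP bA bC (eSP zc mc i j) with hsp
  set lp : Fin 4 → Poly3 := fun i => WFAux.laP bA bC (eLP zc i) with hlp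
  have hVla : ∀ (e : Fin 4 → ℝ) (y : E3),
      pev (WFAux.laP bA bC e) y = ∑ t, e t * cv y t := by
    intro e y
    rw [WFAux.pev_laP]
    exact Finset.sum_congr rfl fun t _ => by rw [hpevb t y]
  have hsp_val : ∀ (i j : Fin 4) (y : E3),
      pev (sp i j) y = (mc i j)⁻¹ * cv y j - (mc i j)⁻¹ * (zc j / zc i) * cv y i := by
    intro i j y
    simp only [hsp]
    rw [hVla]
    simp only [eSP]
    exact WFAux.sum_two_dlt _ _ _ _ _
  have hlp_val : ∀ (i : Fin 4) (y : E3), pev (lp i) y = (zc i)⁻¹ * cv y i := by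
    intro i y
    simp only [hlp]
    rw [hVla]
    simp only [eLP]
    exact WFAux.sum_one_dlt _ _ _
  have hcr_val : ∀ (i i' : Fin 4) (y : E3),
      pev (WFAux.laP bA bC (eCR zc i i')) y = zc i * cv y i' - zc i' * cv y i := by
    intro i i' y
    rw [hVla]
    simp only [eCR]
    exact WFAux.sum_two_dlt _ _ _ _ _
  -- values at the special points
  have hsp_z : ∀ i j, pev (sp i j) W.z = 0 := by
    intro i j
    rw [hsp_val]
    rw [show cv W.z j = zc j from rfl, show cv W.z i = zc i from rfl]
    rw [mul_assoc, div_mul_cancel₀ _ (hzne i), sub_self]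
  have hsp_x : ∀ i j u, pev (sp i j) (W.x u)
      = (mc i j)⁻¹ * (if j = u then 1 else 0)
        - (mc i j)⁻¹ * (zc j / zc i) * (if i = u then 1 else 0) := by
    intro i j u
    rw [hsp_val, hcvx, hcvx]
  have hsp_m : ∀ i j, j ≠ i → pev (sp i j) (W.m i) = 1 := by
    intro i j hj
    rw [hsp_val, hcvm, hcvm, hmc_self, mul_zero, sub_zero,
      inv_mul_cancel₀ (hmc_ne i j hj)]
  have hlp_z : ∀ i, pev (lp i) W.z = 1 := by
    intro i
    rw [hlp_val, show cv W.z i = zc i from rfl, inv_mul_cancel₀ (hzne i)]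
  have hlp_x : ∀ i u, pev (lp i) (W.x u) = (zc i)⁻¹ * (if i = u then 1 else 0) := by
    intro i u; rw [hlp_val, hcvx]
  have hlp_m : ∀ i, pev (lp i) (W.m i) = 0 := by
    intro i; rw [hlp_val, hcvm, hmc_self, mul_zero]
  -- ### polynomial-level facts
  set Wv : Fin 4 → Fin 3 → Poly3 := fun i k => WvP θ mc W.x W.z i k with hWv
  have hu_self : ∀ i, uwt θ mc i i = 0 := by
    intro i
    rw [uwt, hmc_self, map_zero, zero_mul]
  have hu_sum : ∀ i, ∑ t, uwt θ mc i t = 0 := by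
    intro i
    simp only [uwt, wgt, mul_sub]
    rw [Finset.sum_sub_distrib, ← Finset.sum_mul, ← map_sum, hmc_sum, map_one, one_mul, sub_self]
  -- the universal pairing identity
  have hPairE : ∀ (i : Fin 4) (e : Fin 4 → ℝ),
      ∑ k, MvPolynomial.C (∑ t, e t * bC t k) * Wv i k
        = ∑ t, uwt θ mc i t
            * MvPolynomial.C (pev (WFAux.laP bA bC e) (W.x t) - pev (WFAux.laP bA bC e) W.z) := by
    intro i e
    have hval : ∀ t : Fin 4, pev (WFAux.laP bA bC e) (W.x t) - pev (WFAux.laP bA bC e) W.z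
        = ∑ k, (∑ u, e u * bC u k) * (W.x t k - W.z k) := by
      intro t
      rw [show WFAux.laP bA bC e
          = WFAux.mkAff (∑ u, e u * bA u) (fun k => ∑ u, e u * bC u k) from rfl]
      rw [WFAux.pev_mkAff, WFAux.pev_mkAff]
      have h2 : (∑ u, e u * bA u + ∑ k, (∑ u, e u * bC u k) * W.x t k)
          - (∑ u, e u * bA u + ∑ k, (∑ u, e u * bC u k) * W.z k)
          = ∑ k, ((∑ u, e u * bC u k) * W.x t k - (∑ u, e u * bC u k) * W.z k) := by
        rw [Finset.sum_sub_distrib]; ring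
      rw [h2]
      exact Finset.sum_congr rfl fun k _ => by ring
    calc ∑ k, MvPolynomial.C (∑ t, e t * bC t k) * Wv i k
        = ∑ k, ∑ t, uwt θ mc i t
            * MvPolynomial.C ((∑ u, e u * bC u k) * (W.x t k - W.z k)) := by
          refine Finset.sum_congr rfl fun k _ => ?_
          rw [hWv]
          simp only [WvP]
          rw [Finset.mul_sum]
          refine Finset.sum_congr rfl fun t _ => ?_
          rw [map_mul]
          ring
      _ = ∑ t, ∑ k, uwt θ mc i t
            * MvPolynomial.C ((∑ u, e u * bC u k) * (W.x t k - W.z k)) := Finset.sum_comm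
      _ = _ := by
          refine Finset.sum_congr rfl fun t _ => ?_
          rw [← Finset.mul_sum, ← map_sum, hval t]
  -- pairing with `sp i j` gives `wgt i j`
  have hPairSp : ∀ (i j : Fin 4), j ≠ i →
      ∑ k, MvPolynomial.C (∑ t, eSP zc mc i j t * bC t k) * Wv i k = wgt θ mc i j := by
    intro i j hj
    rw [hPairE i (eSP zc mc i j)]
    have hv : ∀ t : Fin 4,
        pev (WFAux.laP bA bC (eSP zc mc i j)) (W.x t)
          - pev (WFAux.laP bA bC (eSP zc mc i j)) W.z
        = (if j = t then 1 else 0) * (mc i j)⁻¹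
          - (mc i j)⁻¹ * (zc j / zc i) * (if i = t then 1 else 0) := by
      intro t
      rw [show WFAux.laP bA bC (eSP zc mc i j) = sp i j from rfl, hsp_x, hsp_z]
      ring
    rw [Finset.sum_congr rfl fun t _ => by rw [hv t]]
    rw [Finset.sum_eq_single j]
    · rw [if_pos rfl, if_neg (Ne.symm hj), one_mul, mul_zero, sub_zero]
      rw [uwt, mul_comm (MvPolynomial.C (mc i j)) (wgt θ mc i j), mul_assoc, ← map_mul,
        mul_inv_cancel₀ (hmc_ne i j hj), map_one, mul_one]
    · intro t _ htj
      by_cases hti : t = i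
      · subst hti
        rw [hu_self, zero_mul]
      · rw [if_neg fun h => htj h.symm, if_neg fun h => hti h.symm]
        simp
    · intro h; exact absurd (Finset.mem_univ j) h
  -- pairing with `lp i` gives `0`
  have hPairLp : ∀ i : Fin 4,
      ∑ k, MvPolynomial.C (∑ t, eLP zc i t * bC t k) * Wv i k = 0 := by
    intro i
    rw [hPairE i (eLP zc i)]
    have hv : ∀ t : Fin 4, t ≠ i →
        pev (WFAux.laP bA bC (eLP zc i)) (W.x t) - pev (WFAux.laP bA bC (eLP zc i)) W.z
          = -1 := by
      intro t ht
      rw [show WFAux.laP bA bC (eLP zc i) = lp i from rfl, hlp_x, hlp_z,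
        if_neg (Ne.symm ht), mul_zero, zero_sub]
    have : ∀ t : Fin 4, uwt θ mc i t
        * MvPolynomial.C (pev (WFAux.laP bA bC (eLP zc i)) (W.x t)
            - pev (WFAux.laP bA bC (eLP zc i)) W.z)
        = uwt θ mc i t * MvPolynomial.C (-1) := by
      intro t
      by_cases hti : t = i
      · subst hti; rw [hu_self, zero_mul, zero_mul]
      · rw [hv t hti]
    rw [Finset.sum_congr rfl fun t _ => this t, ← Finset.sum_mul, hu_sum, zero_mul]
  -- ### the hat function equals `lp i` on each piece
  have hμeq : ∀ σ : WFIdx, μ σ = lp σ.1.1 := by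
    rintro ⟨⟨i, j⟩, hj⟩
    replace hj : j ≠ i := hj
    obtain ⟨hdeg1, hvz, hvm, hvx⟩ := hμ ⟨(i, j), hj⟩
    obtain ⟨aμ, cμ, hde⟩ := WFAux.degLE_one_structure hdeg1
    rw [hde] at hvz hvm hvx ⊢
    have hvj : pev (WFAux.mkAff aμ cμ) (W.x j) = 0 := by
      rw [hmrep i, WFAux.pev_mkAff_combo _ _ _ _ _ (hmc_sum i)] at hvm
      rw [Finset.sum_eq_single j] at hvm
      · exact (mul_eq_zero.mp hvm).resolve_left (hmc_ne i j hj)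
      · intro t _ htj
        by_cases hti : t = i
        · rw [hti, hmc_self, zero_mul]
        · rw [hvx t hti htj, mul_zero]
      · intro h; exact absurd (Finset.mem_univ j) h
    have hvi : pev (WFAux.mkAff aμ cμ) (W.x i) = (zc i)⁻¹ := by
      have h1 : zc i * pev (WFAux.mkAff aμ cμ) (W.x i) = 1 := by
        rw [hzrep, WFAux.pev_mkAff_combo _ _ _ _ _ hzsum] at hvz
        rw [Finset.sum_eq_single i] at hvz
        · exact hvz
        · intro t _ hti
          by_cases htj : t = j
          · rw [htj, hvj, mul_zero]
          · rw [hvx t hti htj, mul_zero]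
        · intro h; exact absurd (Finset.mem_univ i) h
      exact eq_inv_of_mul_eq_one_left (by linarith [mul_comm (zc i) (pev (WFAux.mkAff aμ cμ) (W.x i))] : pev (WFAux.mkAff aμ cμ) (W.x i) * zc i = 1)
    have hall : ∀ t, pev (WFAux.mkAff aμ cμ) (W.x t) = pev (lp i) (W.x t) := by
      intro t
      rw [hlp_x]
      by_cases hti : t = i
      · rw [hti, if_pos rfl, mul_one, hvi]
      · rw [if_neg fun h => hti h.symm, mul_zero]
        by_cases htj : t = j
        · rw [htj, hvj]
        · exact hvx t hti htj
    have hally : ∀ y : E3, pev (WFAux.mkAff aμ cμ) y = pev (lp i) y := by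
      intro y
      have hy := hyrep y
      rw [hy, WFAux.pev_mkAff_combo _ _ _ _ _ (hcvsum y)]
      simp only [hlp]
      rw [WFAux.pev_laP_combo _ _ _ _ _ _ (hcvsum y)]
      refine Finset.sum_congr rfl fun t _ => ?_
      rw [hall t]
    refine MvPolynomial.funext fun v => ?_
    simpa [pev, mk3] using hally (mk3 v)
  -- ### gradient pairing and divergence identities
  have hgrad0 : ∀ (i jj : Fin 4),
      ∑ k, pderiv k (lp i) * (sp i jj * Wv i k) = 0 := by
    intro i jj
    have hterm : ∀ k : Fin 3, pderiv k (lp i) * (sp i jj * Wv i k)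
        = sp i jj * (MvPolynomial.C (∑ t, eLP zc i t * bC t k) * Wv i k) := by
      intro k
      simp only [hlp]
      rw [WFAux.pderiv_laP]
      ring
    rw [Finset.sum_congr rfl fun k _ => hterm k, ← Finset.mul_sum, hPairLp, mul_zero]
  have hdiv : ∀ (i j : Fin 4), j ≠ i →
      ∑ k, pderiv k (sp i j * Wv i k)
        = wgt θ mc i j + sp i j * ∑ k, pderiv k (Wv i k) := by
    intro i j hj
    have hterm : ∀ k : Fin 3, pderiv k (sp i j * Wv i k)
        = MvPolynomial.C (∑ t, eSP zc mc i j t * bC t k) * Wv i k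
          + sp i j * pderiv k (Wv i k) := by
      intro k
      rw [pderiv_mul]
      congr 1
      simp only [hsp]
      rw [WFAux.pderiv_laP]
    rw [Finset.sum_congr rfl fun k _ => hterm k, Finset.sum_add_distrib, hPairSp i j hj,
      ← Finset.mul_sum]
  -- ### the key Leibniz identity with powers of μ
  have hkey : ∀ (s : ℕ) (σ : WFIdx),
      ∑ k, pderiv k (μ σ ^ s * (sp σ.1.1 σ.1.2 * Wv σ.1.1 k))
        = μ σ ^ s * ∑ k, pderiv k (sp σ.1.1 σ.1.2 * Wv σ.1.1 k) := by
    intro s σ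
    have hterm : ∀ k : Fin 3, pderiv k (μ σ ^ s * (sp σ.1.1 σ.1.2 * Wv σ.1.1 k))
        = (s : Poly3) * μ σ ^ (s - 1) * (pderiv k (μ σ) * (sp σ.1.1 σ.1.2 * Wv σ.1.1 k))
          + μ σ ^ s * pderiv k (sp σ.1.1 σ.1.2 * Wv σ.1.1 k) := by
      intro k
      rw [pderiv_mul, pderiv_pow]
      ring
    rw [Finset.sum_congr rfl fun k _ => hterm k, Finset.sum_add_distrib, ← Finset.mul_sum,
      ← Finset.mul_sum]
    rw [show (∑ k, pderiv k (μ σ) * (sp σ.1.1 σ.1.2 * Wv σ.1.1 k)) = 0 from by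
      rw [hμeq σ]; exact hgrad0 σ.1.1 σ.1.2]
    rw [mul_zero, zero_add]
  -- ### degree bounds
  have hθdeg : ∀ σ, degLE (r : ℤ) (θ σ) := hθ
  have hθext_deg : ∀ i t, degLE (r : ℤ) (θext θ i t) := by
    intro i t
    by_cases h : t = i
    · simp only [θext, dif_pos h]; exact WFAux.degLE_zero
    · simp only [θext, dif_neg h]; exact hθdeg _
  have hwgt_deg : ∀ i t, degLE (r : ℤ) (wgt θ mc i t) := by
    intro i t
    refine WFAux.degLE_sub (hθext_deg i t) (WFAux.degLE_sum _ _ fun u _ => ?_)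
    have := WFAux.degLE_mul (WFAux.degLE_C le_rfl (mc i u)) (hθext_deg i u)
    simpa using this
  have hu_deg : ∀ i t, degLE (r : ℤ) (uwt θ mc i t) := by
    intro i t
    have := WFAux.degLE_mul (WFAux.degLE_C le_rfl (mc i t)) (hwgt_deg i t)
    simpa [uwt] using this
  have hWv_deg : ∀ i k, degLE (r : ℤ) (Wv i k) := by
    intro i k
    simp only [hWv, WvP]
    refine WFAux.degLE_sum _ _ fun t _ => ?_
    have := WFAux.degLE_mul (hu_deg i t) (WFAux.degLE_C le_rfl (W.x t k - W.z k))
    simpa using this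
  have hψ_deg : ∀ (i j : Fin 4) (k : Fin 3), degLE ((r : ℤ) + 1) (sp i j * Wv i k) := by
    intro i j k
    refine WFAux.degLE_mono (by omega : (1 : ℤ) + r ≤ (r : ℤ) + 1) ?_
    have h1 : degLE 1 (sp i j) := by
      simp only [hsp]; exact WFAux.degLE_laP _ _ _
    exact WFAux.degLE_mul h1 (hWv_deg i k)
  have hγ_deg : ∀ (σ : WFIdx), degLE (r : ℤ)
      (θ σ - ∑ k, pderiv k (sp σ.1.1 σ.1.2 * Wv σ.1.1 k)) := by
    intro σ
    refine WFAux.degLE_sub (hθdeg σ) ?_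
    refine WFAux.degLE_mono (by omega : (r : ℤ) + 1 - 1 ≤ (r : ℤ)) ?_
    exact WFAux.degLE_sum _ _ fun k _ => WFAux.degLE_pderiv k (hψ_deg σ.1.1 σ.1.2 k)
  -- ### geometric separation
  have hmem : ∀ (i j : Fin 4) (y : E3),
      y ∈ ({W.z, W.m i} ∪ W.x '' {k | k ≠ i ∧ k ≠ j} : Set E3) →
      y = W.z ∨ y = W.m i ∨ ∃ k, k ≠ i ∧ k ≠ j ∧ y = W.x k := by
    intro i j y hy
    rcases hy with hy | hy
    · rcases hy with hy | hy
      · exact Or.inl hy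
      · exact Or.inr (Or.inl hy)
    · obtain ⟨k, hk, rfl⟩ := hy
      exact Or.inr (Or.inr ⟨k, hk.1, hk.2, rfl⟩)
  have hVdiff : ∀ (e1 e2 : Fin 4 → ℝ) (y : E3),
      pev (WFAux.laP bA bC (fun t => e1 t - e2 t)) y
        = pev (WFAux.laP bA bC e1) y - pev (WFAux.laP bA bC e2) y := by
    intro e1 e2 y
    rw [hVla, hVla, hVla, ← Finset.sum_sub_distrib]
    exact Finset.sum_congr rfl fun t _ => by ring
  have hsame : ∀ (σ τ : WFIdx), σ.1.1 = τ.1.1 → ∀ x : E3,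
      x ∈ W.tet σ → x ∈ W.tet τ → pev (sp σ.1.1 σ.1.2) x = pev (sp τ.1.1 τ.1.2) x := by
    rintro ⟨⟨i, j⟩, hj⟩ ⟨⟨i', j'⟩, hj'⟩ hii x hx1 hx2
    replace hj : j ≠ i := hj
    replace hj' : j' ≠ i' := hj'
    simp only at hii ⊢
    subst hii
    by_cases hjj : j = j'
    · subst hjj; rfl
    · have hvals1 : ∀ y ∈ ({W.z, W.m i} ∪ W.x '' {k | k ≠ i ∧ k ≠ j} : Set E3),
          0 ≤ pev (WFAux.laP bA bC (fun t => eSP zc mc i j' t - eSP zc mc i j t)) y := by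
        intro y hy
        rw [hVdiff]
        rw [show WFAux.laP bA bC (eSP zc mc i j') = sp i j' from rfl,
          show WFAux.laP bA bC (eSP zc mc i j) = sp i j from rfl]
        rcases hmem i j y hy with rfl | rfl | ⟨k, hki, hkj, rfl⟩
        · rw [hsp_z, hsp_z, sub_zero]
        · rw [hsp_m i j' hj', hsp_m i j hj, sub_self]
        · have e1 : pev (sp i j') (W.x k) = (mc i j')⁻¹ * (if j' = k then 1 else 0) := by
            rw [hsp_x, if_neg (show ¬(i = k) from fun h => hki h.symm), mul_zero, sub_zero]
          have e2 : pev (sp i j) (W.x k) = 0 := by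
            rw [hsp_x, if_neg (show ¬(i = k) from fun h => hki h.symm),
              if_neg (show ¬(j = k) from fun h => hkj h.symm), mul_zero, mul_zero, sub_zero]
          rw [e1, e2, sub_zero]
          by_cases hk : j' = k
          · rw [if_pos hk, mul_one]
            exact le_of_lt (inv_pos.mpr (hmc_pos i j' hj'))
          · rw [if_neg hk, mul_zero]
      have hvals2 : ∀ y ∈ ({W.z, W.m i} ∪ W.x '' {k | k ≠ i ∧ k ≠ j'} : Set E3),
          0 ≤ pev (WFAux.laP bA bC (fun t => eSP zc mc i j t - eSP zc mc i j' t)) y := by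
        intro y hy
        rw [hVdiff]
        rw [show WFAux.laP bA bC (eSP zc mc i j') = sp i j' from rfl,
          show WFAux.laP bA bC (eSP zc mc i j) = sp i j from rfl]
        rcases hmem i j' y hy with rfl | rfl | ⟨k, hki, hkj, rfl⟩
        · rw [hsp_z, hsp_z, sub_zero]
        · rw [hsp_m i j' hj', hsp_m i j hj, sub_self]
        · have e1 : pev (sp i j) (W.x k) = (mc i j)⁻¹ * (if j = k then 1 else 0) := by
            rw [hsp_x, if_neg (show ¬(i = k) from fun h => hki h.symm), mul_zero, sub_zero]
          have e2 : pev (sp i j') (W.x k) = 0 := by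
            rw [hsp_x, if_neg (show ¬(i = k) from fun h => hki h.symm),
              if_neg (show ¬(j' = k) from fun h => hkj h.symm), mul_zero, mul_zero, sub_zero]
          rw [e1, e2, sub_zero]
          by_cases hk : j = k
          · rw [if_pos hk, mul_one]
            exact le_of_lt (inv_pos.mpr (hmc_pos i j hj))
          · rw [if_neg hk, mul_zero]
      have h1 : 0 ≤ pev (WFAux.laP bA bC
          (fun t => eSP zc mc i j' t - eSP zc mc i j t)) x :=
        WFAux.pev_nonneg_on_hull _ _ hx1 hvals1
      have h2 : 0 ≤ pev (WFAux.laP bA bC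
          (fun t => eSP zc mc i j t - eSP zc mc i j' t)) x :=
        WFAux.pev_nonneg_on_hull _ _ hx2 hvals2
      rw [hVdiff] at h1 h2
      rw [show WFAux.laP bA bC (eSP zc mc i j') = sp i j' from rfl,
        show WFAux.laP bA bC (eSP zc mc i j) = sp i j from rfl] at h1 h2
      linarith
  have hcross : ∀ (σ τ : WFIdx), σ.1.1 ≠ τ.1.1 → ∀ x : E3,
      x ∈ W.tet σ → x ∈ W.tet τ →
      pev (sp σ.1.1 σ.1.2) x = 0 ∧ pev (sp τ.1.1 τ.1.2) x = 0 := by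
    rintro ⟨⟨i, j⟩, hj⟩ ⟨⟨i', j'⟩, hj'⟩ hii x hx1 hx2
    replace hj : j ≠ i := hj
    replace hj' : j' ≠ i' := hj'
    simp only at hii ⊢
    have hvals1 : ∀ y ∈ ({W.z, W.m i} ∪ W.x '' {k | k ≠ i ∧ k ≠ j} : Set E3),
        0 ≤ pev (WFAux.laP bA bC (eCR zc i i')) y := by
      intro y hy
      rw [hcr_val]
      rcases hmem i j y hy with rfl | rfl | ⟨k, hki, hkj, rfl⟩
      · rw [show cv W.z i' = zc i' from rfl, show cv W.z i = zc i from rfl]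
        rw [mul_comm, sub_self]
      · rw [hcvm, hcvm, hmc_self, mul_zero, sub_zero]
        exact le_of_lt (mul_pos (hzpos i) (hmc_pos i i' (Ne.symm hii)))
      · rw [hcvx, hcvx, if_neg (show ¬(i = k) from fun h => hki h.symm), mul_zero, sub_zero]
        by_cases hk : i' = k
        · rw [if_pos hk, mul_one]; exact le_of_lt (hzpos i)
        · rw [if_neg hk, mul_zero]
    have hvals2 : ∀ y ∈ ({W.z, W.m i'} ∪ W.x '' {k | k ≠ i' ∧ k ≠ j'} : Set E3),
        0 ≤ pev (WFAux.laP bA bC (eCR zc i' i)) y := by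
      intro y hy
      rw [hcr_val]
      rcases hmem i' j' y hy with rfl | rfl | ⟨k, hki, hkj, rfl⟩
      · rw [show cv W.z i' = zc i' from rfl, show cv W.z i = zc i from rfl]
        rw [mul_comm, sub_self]
      · rw [hcvm, hcvm, hmc_self, mul_zero, sub_zero]
        exact le_of_lt (mul_pos (hzpos i') (hmc_pos i' i hii))
      · rw [hcvx, hcvx, if_neg (show ¬(i' = k) from fun h => hki h.symm), mul_zero, sub_zero]
        by_cases hk : i = k
        · rw [if_pos hk, mul_one]; exact le_of_lt (hzpos i')
        · rw [if_neg hk, mul_zero]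
    have h1 : 0 ≤ pev (WFAux.laP bA bC (eCR zc i i')) x :=
      WFAux.pev_nonneg_on_hull _ _ hx1 hvals1
    have h2 : 0 ≤ pev (WFAux.laP bA bC (eCR zc i' i)) x :=
      WFAux.pev_nonneg_on_hull _ _ hx2 hvals2
    have h0 : pev (WFAux.laP bA bC (eCR zc i i')) x = 0 := by
      have hrel : pev (WFAux.laP bA bC (eCR zc i' i)) x
          = - pev (WFAux.laP bA bC (eCR zc i i')) x := by
        rw [hcr_val, hcr_val]; ring
      rw [hrel] at h2
      linarith
    have h0' : pev (WFAux.laP bA bC (eCR zc i' i)) x = 0 := by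
      rw [hcr_val] at h0 ⊢
      linarith
    constructor
    · refine WFAux.pev_eq_zero_on_hull _ _ _ _ hx1 hvals1 ?_ h0
      intro y hy hpy
      replace hpy : pev (WFAux.laP bA bC (eCR zc i i')) y = 0 := hpy
      show pev (sp i j) y = 0
      rcases hmem i j y hy with rfl | rfl | ⟨k, hki, hkj, rfl⟩
      · exact hsp_z i j
      · exfalso
        rw [hcr_val, hcvm, hcvm, hmc_self, mul_zero, sub_zero] at hpy
        exact (mul_pos (hzpos i) (hmc_pos i i' (Ne.symm hii))).ne' hpy
      · rw [hsp_x, if_neg (show ¬(j = k) from fun h => hkj h.symm),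
          if_neg (show ¬(i = k) from fun h => hki h.symm), mul_zero, mul_zero, sub_zero]
    · refine WFAux.pev_eq_zero_on_hull _ _ _ _ hx2 hvals2 ?_ h0'
      intro y hy hpy
      replace hpy : pev (WFAux.laP bA bC (eCR zc i' i)) y = 0 := hpy
      show pev (sp i' j') y = 0
      rcases hmem i' j' y hy with rfl | rfl | ⟨k, hki, hkj, rfl⟩
      · exact hsp_z i' j'
      · exfalso
        rw [hcr_val, hcvm, hcvm, hmc_self, mul_zero, sub_zero] at hpy
        exact (mul_pos (hzpos i') (hmc_pos i' i hii)).ne' hpy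
      · rw [hsp_x, if_neg (show ¬(j' = k) from fun h => hkj h.symm),
          if_neg (show ¬(i' = k) from fun h => hki h.symm), mul_zero, mul_zero, sub_zero]
  -- ### continuity of ψ
  have hVC : ∀ (σ τ : WFIdx), ∀ x ∈ W.tet σ ∩ W.tet τ,
      vev (fun k => sp σ.1.1 σ.1.2 * Wv σ.1.1 k) x
        = vev (fun k => sp τ.1.1 τ.1.2 * Wv τ.1.1 k) x := by
    intro σ τ x hx
    by_cases hii : σ.1.1 = τ.1.1
    · have hs := hsame σ τ hii x hx.1 hx.2
      refine PiLp.ext fun k => ?_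
      show pev (sp σ.1.1 σ.1.2 * Wv σ.1.1 k) x = pev (sp τ.1.1 τ.1.2 * Wv τ.1.1 k) x
      rw [WFAux.pev_mul, WFAux.pev_mul, hs, hii]
    · obtain ⟨hz1, hz2⟩ := hcross σ τ hii x hx.1 hx.2
      refine PiLp.ext fun k => ?_
      show pev (sp σ.1.1 σ.1.2 * Wv σ.1.1 k) x = pev (sp τ.1.1 τ.1.2 * Wv τ.1.1 k) x
      rw [WFAux.pev_mul, WFAux.pev_mul, hz1, hz2, zero_mul, zero_mul]
  -- ### zero normal trace of ψ (in fact everywhere in space)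
  have hζ : ∀ (σ : WFIdx) (x : E3),
      vev (fun k => sp σ.1.1 σ.1.2 * Wv σ.1.1 k) x ∈ Submodule.span ℝ
        ((fun p : Fin 4 × Fin 4 => W.x p.1 - W.x p.2) ''
          {p | p.1 ≠ σ.1.1 ∧ p.2 ≠ σ.1.1}) := by
    intro σ x
    set i := σ.1.1 with hidef
    set t0 : Fin 4 := if i = 0 then 1 else 0 with ht0def
    have ht0 : t0 ≠ i := by
      by_cases h0 : i = 0
      · rw [ht0def, if_pos h0, h0]; decide
      · rw [ht0def, if_neg h0]; exact fun h => h0 h.symm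
    set av : Fin 4 → ℝ := fun t => pev (sp i σ.1.2) x * pev (uwt θ mc i t) x with havdef
    have hs0 : ∑ t, pev (uwt θ mc i t) x = 0 := by
      rw [← WFAux.pev_sum, hu_sum i, WFAux.pev_zero]
    have hav : ∑ t, av t = 0 := by
      simp only [havdef]
      rw [← Finset.mul_sum, hs0, mul_zero]
    have hrep : vev (fun k => sp i σ.1.2 * Wv i k) x
        = ∑ t, av t • (W.x t - W.x t0) := by
      refine PiLp.ext fun k => ?_
      have hRHS : (∑ t, av t • (W.x t - W.x t0)) k
          = ∑ t, av t * (W.x t k - W.x t0 k) := by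
        rw [WFAux.e3_sum_apply]
        exact Finset.sum_congr rfl fun t _ => rfl
      rw [hRHS]
      show pev (sp i σ.1.2 * Wv i k) x = _
      rw [WFAux.pev_mul]
      have hWvval : pev (Wv i k) x = ∑ t, pev (uwt θ mc i t) x * (W.x t k - W.z k) := by
        simp only [hWv, WvP]
        rw [WFAux.pev_sum]
        exact Finset.sum_congr rfl fun t _ => by rw [WFAux.pev_mul, WFAux.pev_C]
      rw [hWvval, Finset.mul_sum]
      have hterm : ∀ t, pev (sp i σ.1.2) x * (pev (uwt θ mc i t) x * (W.x t k - W.z k))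
          = av t * (W.x t k - W.x t0 k) + av t * (W.x t0 k - W.z k) := by
        intro t
        simp only [havdef]
        ring
      rw [Finset.sum_congr rfl fun t _ => hterm t, Finset.sum_add_distrib,
        ← Finset.sum_mul, hav, zero_mul, add_zero]
    rw [hrep]
    refine Submodule.sum_mem _ fun t _ => ?_
    by_cases hti : t = i
    · have hz : av t = 0 := by
        simp only [havdef]
        rw [hti, hu_self i, WFAux.pev_zero, mul_zero]
      rw [hz, zero_smul]
      exact Submodule.zero_mem _
    · exact Submodule.smul_mem _ _
        (Submodule.subset_span ⟨(t, t0), ⟨hti, ht0⟩, rfl⟩)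
  -- ### value identity for γ pieces
  have hγval : ∀ (σ : WFIdx) (x : E3),
      pev (θ σ - ∑ k, pderiv k (sp σ.1.1 σ.1.2 * Wv σ.1.1 k)) x
        = pev (∑ u, MvPolynomial.C (mc σ.1.1 u) * θext θ σ.1.1 u) x
          - pev (sp σ.1.1 σ.1.2) x * pev (∑ k, pderiv k (Wv σ.1.1 k)) x := by
    intro σ x
    have hθe : θext θ σ.1.1 σ.1.2 = θ σ := by
      simp only [θext]
      rw [dif_neg σ.2]
    rw [WFAux.pev_sub, hdiv σ.1.1 σ.1.2 σ.2, WFAux.pev_add, WFAux.pev_mul]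
    have : pev (wgt θ mc σ.1.1 σ.1.2) x
        = pev (θ σ) x - pev (∑ u, MvPolynomial.C (mc σ.1.1 u) * θext θ σ.1.1 u) x := by
      simp only [wgt]
      rw [WFAux.pev_sub, hθe]
    rw [this]
    ring
  -- ### assemble
  refine ⟨fun σ k => sp σ.1.1 σ.1.2 * Wv σ.1.1 k,
    fun σ => θ σ - ∑ k, pderiv k (sp σ.1.1 σ.1.2 * Wv σ.1.1 k),
    ⟨fun σ k => hψ_deg σ.1.1 σ.1.2 k, fun σ τ x hx => hVC σ τ x hx⟩,
    ⟨⟨fun σ k => hψ_deg σ.1.1 σ.1.2 k, ?_, ?_⟩, fun σ x _ => hζ σ x⟩,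
    ⟨fun σ => hγ_deg σ, ?_⟩, ?_⟩
  · -- HdivMem, first family
    intro i j j' k hj hj' hjj hki hkj hkj' x hx
    rw [hVC ⟨(i, j), hj⟩ ⟨(i, j'), hj'⟩ x hx, sub_self]
    exact Submodule.zero_mem _
  · -- HdivMem, second family
    intro i j k l hj hi hki hkj hli hlj hkl x hx
    rw [hVC ⟨(i, j), hj⟩ ⟨(j, i), hi⟩ x hx, sub_self]
    exact Submodule.zero_mem _
  · -- faceCont for γ
    intro σ τ hii x hx
    obtain ⟨⟨hx1, hx2⟩, -⟩ := hx
    have hs := hsame σ τ hii x hx1 hx2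
    rw [hγval σ x, hγval τ x]
    rw [hii] at hs ⊢
    rw [hs]
  · -- the divergence identity
    intro s σ x _
    simp only [pwDiv]
    rw [hkey s σ, WFAux.pev_mul, WFAux.pev_pow, WFAux.pev_sub]
    ring
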